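/- arXiv:2301.00585 — 3 statements merged into one kernel-verified Lean document; each statement's English description precedes it below -/
import Mathlib

section
/- Let 0 < γ ≤ 1 and let c be a real constant. Then for every real t > 0 the function τ ↦ E_{γ,1}(c τ^γ) is differentiable at t with derivative c · t^{γ−1} · E_{γ,γ}(c t^γ); that is, (d/dτ)E_{γ,1}(c τ^γ) = c τ^{γ−1} E_{γ,γ}(c τ^γ) for τ > 0. -/
open Real Filter

/-- Summability of the Mittag-Leffler series. -/
lemma mittagLeffler_summable (γ β x : ℝ) (hγ : 0 < γ) :
    Summable (fun k : ℕ => x ^ k / Real.Gamma (γ * k + β)) := by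
  set R : ℝ := max 1 ((2 * |x| + 1) ^ (1 / γ)) with hR
  have hR1 : (1 : ℝ) ≤ R := le_max_left _ _
  have hR0 : (0 : ℝ) < R := lt_of_lt_of_le one_pos hR1
  have hRγ : 2 * |x| + 1 ≤ R ^ γ := by
    have h1 : (2 * |x| + 1) ^ (1 / γ) ≤ R := le_max_right _ _
    have h2 : ((2 * |x| + 1) ^ (1 / γ)) ^ γ ≤ R ^ γ :=
      Real.rpow_le_rpow (Real.rpow_nonneg (by positivity) _) h1 hγ.le
    rwa [← Real.rpow_mul (by positivity), one_div,
      inv_mul_cancel₀ hγ.ne', Real.rpow_one] at h2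
  have hfac : ∀ᶠ m : ℕ in atTop, R ^ m ≤ (m.factorial : ℝ) := by
    have h := (Real.summable_pow_div_factorial R).tendsto_atTop_zero
    filter_upwards [h.eventually_le_const one_pos] with m hm
    have hmpos : (0 : ℝ) < (m.factorial : ℝ) := by exact_mod_cast m.factorial_pos
    rwa [div_le_one hmpos] at hm
  obtain ⟨M, hM⟩ := eventually_atTop.mp hfac
  have htend : Tendsto (fun k : ℕ => γ * k + β) atTop atTop :=
    tendsto_atTop_add_const_right _ β
      (Tendsto.const_mul_atTop hγ tendsto_natCast_atTop_atTop)
  apply Summable.of_norm_bounded_eventually (g := fun k : ℕ => R ^ (2 - β) * (1 / 2) ^ k)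
    ((summable_geometric_two).mul_left _)
  rw [Nat.cofinite_eq_atTop]
  filter_upwards [htend.eventually_ge_atTop ((M : ℝ) + 3)] with k hk
  set y : ℝ := γ * k + β with hy
  have hy3 : (3 : ℝ) ≤ y := by
    have : (0 : ℝ) ≤ M := Nat.cast_nonneg M
    linarith
  have hy0 : (0 : ℝ) < y := by linarith
  have hfl3 : 3 ≤ ⌊y⌋₊ := Nat.le_floor (by exact_mod_cast hy3)
  have hflM : M + 1 ≤ ⌊y⌋₊ := Nat.le_floor (by push_cast; linarith)
  set n : ℕ := ⌊y⌋₊ - 1 with hn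
  have hn1 : n + 1 = ⌊y⌋₊ := Nat.succ_pred_eq_of_pos (lt_of_lt_of_le (by norm_num) hfl3)
  have hnM : M ≤ n := hn ▸ Nat.le_sub_one_of_lt hflM
  have hΓpos : 0 < Real.Gamma y := Real.Gamma_pos_of_pos hy0
  have hmono : Real.Gamma ((⌊y⌋₊ : ℝ)) ≤ Real.Gamma y := by
    rcases eq_or_lt_of_le (Nat.floor_le hy0.le) with h | h
    · rw [h]
    · refine (Real.Gamma_strictMonoOn_Ici ?_ ?_ h).le
      · have h3 : (3 : ℝ) ≤ (⌊y⌋₊ : ℝ) := by exact_mod_cast hfl3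
        exact Set.mem_Ici.mpr (by linarith)
      · exact Set.mem_Ici.mpr (by linarith)
  have hΓfac : (n.factorial : ℝ) ≤ Real.Gamma y := by
    have heq : Real.Gamma ((⌊y⌋₊ : ℝ)) = (n.factorial : ℝ) := by
      rw [← hn1]; push_cast; rw [Real.Gamma_nat_eq_factorial]
    linarith
  have hRn : R ^ (y - 2) ≤ (n.factorial : ℝ) := by
    have h1 : R ^ (y - 2) ≤ R ^ ((n : ℝ)) := by
      apply Real.rpow_le_rpow_of_exponent_le hR1
      have hfl : y < (⌊y⌋₊ : ℝ) + 1 := Nat.lt_floor_add_one y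
      have hcast : (n : ℝ) = (⌊y⌋₊ : ℝ) - 1 := by
        rw [← hn1]; push_cast; ring
      linarith
    calc R ^ (y - 2) ≤ R ^ ((n : ℝ)) := h1
      _ = R ^ n := by rw [Real.rpow_natCast]
      _ ≤ (n.factorial : ℝ) := hM n hnM
  have hΓR : R ^ (y - 2) ≤ Real.Gamma y := le_trans hRn hΓfac
  have hRy : (0 : ℝ) < R ^ (y - 2) := Real.rpow_pos_of_pos hR0 _
  have hRγ0 : (0 : ℝ) < R ^ γ := Real.rpow_pos_of_pos hR0 _
  have key : |x| ^ k / Real.Gamma y ≤ R ^ (2 - β) * (1 / 2) ^ k := by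
    have h1 : |x| ^ k / Real.Gamma y ≤ |x| ^ k / R ^ (y - 2) :=
      div_le_div_of_nonneg_left (by positivity) hRy hΓR
    have h2 : R ^ (y - 2) = R ^ (γ * (k : ℝ)) / R ^ (2 - β) := by
      rw [← Real.rpow_sub hR0]; congr 1; rw [hy]; ring
    have h3 : R ^ (γ * (k : ℝ)) = (R ^ γ) ^ k := by
      rw [Real.rpow_mul hR0.le, Real.rpow_natCast]
    have h4 : |x| ^ k / R ^ (y - 2) = R ^ (2 - β) * (|x| ^ k / (R ^ γ) ^ k) := by
      rw [h2, h3]; field_simp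
    have h5 : |x| ^ k / (R ^ γ) ^ k ≤ (1 / 2) ^ k := by
      rw [← div_pow]
      apply pow_le_pow_left₀ (by positivity)
      rw [div_le_div_iff₀ hRγ0 (by norm_num : (0:ℝ) < 2)]
      nlinarith [abs_nonneg x]
    calc |x| ^ k / Real.Gamma y ≤ |x| ^ k / R ^ (y - 2) := h1
      _ = R ^ (2 - β) * (|x| ^ k / (R ^ γ) ^ k) := h4
      _ ≤ R ^ (2 - β) * (1 / 2) ^ k := by
          apply mul_le_mul_of_nonneg_left h5 (Real.rpow_nonneg hR0.le _)
  calc ‖x ^ k / Real.Gamma y‖ = |x| ^ k / Real.Gamma y := by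
        rw [Real.norm_eq_abs, abs_div, abs_pow, abs_of_pos hΓpos]
    _ ≤ _ := key

/-- The real two-parameter Mittag-Leffler function
`E_{γ,β}(t) = ∑_{k=0}^∞ t^k / Γ(γ k + β)`. -/
noncomputable def mittagLeffler (γ β : ℝ) (t : ℝ) : ℝ :=
  ∑' k : ℕ, t ^ k / Real.Gamma (γ * k + β)

/-- For `0 < γ ≤ 1`, a real constant `c` and `t > 0`, the function
`τ ↦ E_{γ,1}(c τ^γ)` is differentiable at `t` with derivative
`c · t^{γ−1} · E_{γ,γ}(c t^γ)`. -/
theorem mittagLeffler_hasDerivAt (γ c t : ℝ) (hγ0 : 0 < γ) (hγ1 : γ ≤ 1) (ht : 0 < t) :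
    HasDerivAt (fun τ : ℝ => mittagLeffler γ 1 (c * τ ^ γ))
      (c * t ^ (γ - 1) * mittagLeffler γ γ (c * t ^ γ)) t := by
  have h2t : (0 : ℝ) < 2 * t := by linarith
  set s : Set ℝ := Set.Ioo (t / 2) (2 * t) with hs
  have hopen : IsOpen s := isOpen_Ioo
  have hconn : IsPreconnected s := (convex_Ioo _ _).isPreconnected
  have hts : t ∈ s := ⟨by linarith, by linarith⟩
  set y : ℝ := |c| * (2 * t) ^ γ with hy
  set C : ℝ := |c| * (γ * ((2 * t) ^ γ / (t / 2))) with hC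
  set f : ℕ → ℝ → ℝ := fun k τ => (c * τ ^ γ) ^ k / Real.Gamma (γ * k + 1) with hf
  set f' : ℕ → ℝ → ℝ := fun k τ =>
    ((k : ℝ) * (c * τ ^ γ) ^ (k - 1) * (c * (γ * τ ^ (γ - 1)))) / Real.Gamma (γ * k + 1) with hf'
  set u : ℕ → ℝ := fun k => (2 * max y 1) ^ k * C / Real.Gamma (γ * k + 1) with hu
  have hΓpos : ∀ k : ℕ, 0 < Real.Gamma (γ * k + 1) := fun k =>
    Real.Gamma_pos_of_pos (by positivity)
  have hu_sum : Summable u := by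
    apply ((mittagLeffler_summable γ 1 (2 * max y 1) hγ0).mul_left C).congr
    intro k
    simp only [hu]
    ring
  have hderiv : ∀ (k : ℕ) (τ : ℝ), τ ∈ s → HasDerivAt (f k) (f' k τ) τ := by
    intro k τ hτ
    have hτ0 : 0 < τ := lt_trans (by linarith) hτ.1
    have h1 : HasDerivAt (fun x : ℝ => c * x ^ γ) (c * (γ * τ ^ (γ - 1))) τ :=
      (Real.hasDerivAt_rpow_const (Or.inl hτ0.ne')).const_mul c
    exact (h1.pow k).div_const _
  have hbound : ∀ (k : ℕ) (τ : ℝ), τ ∈ s → ‖f' k τ‖ ≤ u k := by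
    intro k τ hτ
    have hτ0 : 0 < τ := lt_trans (by linarith) hτ.1
    have hτle : τ ≤ 2 * t := hτ.2.le
    have hτge : t / 2 ≤ τ := hτ.1.le
    have hm1 : (1 : ℝ) ≤ max y 1 := le_max_right _ _
    have hpow : |c * τ ^ γ| ≤ max y 1 := by
      calc |c * τ ^ γ| = |c| * τ ^ γ := by
            rw [abs_mul, abs_of_nonneg (Real.rpow_nonneg hτ0.le _)]
        _ ≤ |c| * (2 * t) ^ γ :=
            mul_le_mul_of_nonneg_left (Real.rpow_le_rpow hτ0.le hτle hγ0.le) (abs_nonneg c)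
        _ ≤ max y 1 := le_max_left _ _
    have hτγ1 : τ ^ (γ - 1) ≤ (2 * t) ^ γ / (t / 2) := by
      rw [Real.rpow_sub hτ0, Real.rpow_one]
      exact div_le_div₀ (Real.rpow_nonneg h2t.le _)
        (Real.rpow_le_rpow hτ0.le hτle hγ0.le) (by linarith) hτge
    have hnum : |(k : ℝ) * (c * τ ^ γ) ^ (k - 1) * (c * (γ * τ ^ (γ - 1)))|
        ≤ (2 * max y 1) ^ k * C := by
      have habs : |(k : ℝ) * (c * τ ^ γ) ^ (k - 1) * (c * (γ * τ ^ (γ - 1)))|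
          = (k : ℝ) * |c * τ ^ γ| ^ (k - 1) * (|c| * (γ * τ ^ (γ - 1))) := by
        rw [abs_mul, abs_mul ((k : ℝ)) _, Nat.abs_cast, abs_pow,
          abs_mul c (γ * τ ^ (γ - 1)),
          abs_of_nonneg (by positivity : (0:ℝ) ≤ γ * τ ^ (γ - 1))]
      rw [habs]
      have hk2 : (k : ℝ) ≤ 2 ^ k := by exact_mod_cast (Nat.lt_two_pow_self (n := k)).le
      have e1 : |c * τ ^ γ| ^ (k - 1) ≤ (max y 1) ^ k :=
        le_trans (pow_le_pow_left₀ (abs_nonneg _) hpow _)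
          (pow_le_pow_right₀ hm1 (Nat.sub_le _ _))
      have e2 : |c| * (γ * τ ^ (γ - 1)) ≤ C :=
        mul_le_mul_of_nonneg_left
          (mul_le_mul_of_nonneg_left hτγ1 hγ0.le) (abs_nonneg c)
      calc (k : ℝ) * |c * τ ^ γ| ^ (k - 1) * (|c| * (γ * τ ^ (γ - 1)))
          ≤ (2 ^ k * (max y 1) ^ k) * C := by
            apply mul_le_mul _ e2 (by positivity) (by positivity)
            exact mul_le_mul hk2 e1 (by positivity) (by positivity)
        _ = (2 * max y 1) ^ k * C := by rw [mul_pow]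
    calc ‖f' k τ‖ = |(k : ℝ) * (c * τ ^ γ) ^ (k - 1) * (c * (γ * τ ^ (γ - 1)))|
          / Real.Gamma (γ * k + 1) := by
          rw [hf', Real.norm_eq_abs, abs_div, abs_of_pos (hΓpos k)]
      _ ≤ u k := by simp only [hu]; exact div_le_div_of_nonneg_right hnum (hΓpos k).le
  have hsum0 : Summable fun k => f k t := mittagLeffler_summable γ 1 (c * t ^ γ) hγ0
  have main : HasDerivAt (fun z => ∑' n, f n z) (∑' n, f' n t) t :=
    hasDerivAt_tsum_of_isPreconnected hu_sum hopen hconn hderiv hbound hts hsum0 hts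
  have hsum' : Summable fun k => f' k t :=
    Summable.of_norm_bounded (g := u) hu_sum fun k => hbound k t hts
  have hval : (∑' n, f' n t) = c * t ^ (γ - 1) * mittagLeffler γ γ (c * t ^ γ) := by
    rw [Summable.tsum_eq_zero_add hsum']
    have h0 : f' 0 t = 0 := by simp [hf']
    have hshift : ∀ k : ℕ, f' (k + 1) t
        = c * t ^ (γ - 1) * ((c * t ^ γ) ^ k / Real.Gamma (γ * k + γ)) := by
      intro k
      have hkγ : γ * ((k : ℝ) + 1) ≠ 0 := by positivity
      have hΓγ : (0 : ℝ) < Real.Gamma (γ * k + γ) := Real.Gamma_pos_of_pos (by positivity)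
      have hGa : Real.Gamma (γ * (k + 1 : ℕ) + 1)
          = γ * ((k : ℝ) + 1) * Real.Gamma (γ * k + γ) := by
        push_cast
        rw [show γ * ((k : ℝ) + 1) + 1 = (γ * ((k : ℝ) + 1)) + 1 by ring,
          Real.Gamma_add_one hkγ]
        congr 1
        ring_nf
      simp only [hf', hGa]
      push_cast
      field_simp
    rw [h0, zero_add, tsum_congr hshift, tsum_mul_left]
    rfl
  rw [← hval]
  exact main
end

section
/- Let 0 < γ < 1 and T > 0. Then for every real s > 0 one has s/(1 − E_{γ,1}(−s T^γ)) ≤ s + Γ(1+γ)/T^γ. -/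
namespace MLBound

open MeasureTheory Set Filter intervalIntegral

variable {γ β : ℝ}

lemma Gamma_ratio {a c : ℝ} (ha : 1 < a) (hc0 : 0 < c) (hc1 : c ≤ 1) :
    (a - 1) ^ c * Real.Gamma a ≤ Real.Gamma (a + c) := by
  have h0 : (0:ℝ) < a - 1 := by linarith
  have hga : 0 < Real.Gamma a := Real.Gamma_pos_of_pos (by linarith)
  have hga1 : 0 < Real.Gamma (a - 1) := Real.Gamma_pos_of_pos h0
  have hgac : 0 < Real.Gamma (a + c) := Real.Gamma_pos_of_pos (by linarith)
  have hslope := Real.convexOn_log_Gamma.slope_mono_adjacent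
      (x := a - 1) (y := a) (z := a + c)
      (mem_Ioi.2 h0) (mem_Ioi.2 (by linarith)) (by linarith) (by linarith)
  simp only [Function.comp_apply] at hslope
  have hgam : Real.Gamma a = (a - 1) * Real.Gamma (a - 1) := by
    have := Real.Gamma_add_one (s := a - 1) h0.ne'
    rw [sub_add_cancel] at this
    exact this
  have hlog : Real.log (Real.Gamma a) - Real.log (Real.Gamma (a - 1)) = Real.log (a - 1) := by
    rw [hgam, Real.log_mul h0.ne' hga1.ne']; ring
  have hd1 : a - (a - 1) = 1 := by ring
  have hd2 : a + c - a = c := by ring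
  rw [hd1, hd2, div_one, hlog] at hslope
  -- hslope : log (a-1) ≤ (log Γ(a+c) - log Γ a) / c
  have h2 : c * Real.log (a - 1) + Real.log (Real.Gamma a) ≤ Real.log (Real.Gamma (a + c)) := by
    rw [le_div_iff₀ hc0] at hslope
    nlinarith [hslope]
  have := Real.exp_le_exp.2 h2
  rwa [Real.exp_add, Real.exp_log hga, Real.exp_log hgac, mul_comm c,
    ← Real.rpow_def_of_pos h0] at this

lemma summable_ml (hγ0 : 0 < γ) (hγ1 : γ ≤ 1) (hβ : 0 < β) (x : ℝ) :
    Summable (fun k : ℕ => x ^ k / Real.Gamma (γ * k + β)) := by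
  have hΓ : ∀ k : ℕ, 0 < Real.Gamma (γ * k + β) := fun k =>
    Real.Gamma_pos_of_pos (by positivity)
  apply summable_of_ratio_norm_eventually_le (r := 1/2) (by norm_num)
  obtain ⟨K, hK⟩ := exists_nat_ge ((2 + (2*|x|+1) ^ (1/γ) - β)/γ)
  filter_upwards [Filter.eventually_ge_atTop K] with k hk
  have hkK : ((K:ℝ)) ≤ (k:ℝ) := Nat.cast_le.2 hk
  have ha2 : 2 + (2*|x|+1) ^ (1/γ) ≤ γ * k + β := by
    rw [div_le_iff₀ hγ0] at hK
    nlinarith [hK, mul_le_mul_of_nonneg_left hkK hγ0.le]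
  set a := γ * k + β with hadef
  have hApos : (0:ℝ) < 2*|x|+1 := by positivity
  have hA1 : (1:ℝ) ≤ (2*|x|+1) ^ (1/γ) := Real.one_le_rpow (by linarith [abs_nonneg x]) (by positivity)
  have ha1 : 1 < a := by nlinarith
  have hpow : (2*|x|+1) ≤ (a - 1) ^ γ := by
    have hbase : (2*|x|+1) ^ (1/γ) ≤ a - 1 := by linarith
    calc (2*|x|+1) = ((2*|x|+1) ^ (1/γ)) ^ γ := by
          rw [← Real.rpow_mul hApos.le, one_div, inv_mul_cancel₀ hγ0.ne', Real.rpow_one]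
      _ ≤ (a - 1) ^ γ := Real.rpow_le_rpow (by positivity) hbase hγ0.le
  have hΓineq : (2*|x|+1) * Real.Gamma a ≤ Real.Gamma (a + γ) := by
    have hga : 0 < Real.Gamma a := Real.Gamma_pos_of_pos (by linarith)
    calc (2*|x|+1) * Real.Gamma a ≤ (a-1)^γ * Real.Gamma a := by
          apply mul_le_mul_of_nonneg_right hpow hga.le
      _ ≤ Real.Gamma (a + γ) := Gamma_ratio ha1 hγ0 hγ1
  have hgag : 0 < Real.Gamma (a + γ) := Real.Gamma_pos_of_pos (by positivity)
  have hga : 0 < Real.Gamma a := hΓ k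
  have harg : γ * ((k+1 : ℕ):ℝ) + β = a + γ := by push_cast; ring
  rw [harg, Real.norm_eq_abs, Real.norm_eq_abs, abs_div, abs_div, abs_of_pos hgag,
    abs_of_pos hga, pow_succ, abs_mul, abs_pow]
  have hrhs : (1:ℝ)/2 * (|x|^k/Real.Gamma a) = |x|^k/(2*Real.Gamma a) := by ring
  rw [hrhs, div_le_div_iff₀ hgag (by positivity)]
  have key : |x| * Real.Gamma a * 2 ≤ Real.Gamma (a+γ) := by nlinarith
  nlinarith [pow_nonneg (abs_nonneg x) k, key,
    mul_le_mul_of_nonneg_left key (pow_nonneg (abs_nonneg x) k)]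

lemma ml_zero (hβ : 0 < β) : mittagLeffler γ β 0 = 1 / Real.Gamma β := by
  rw [mittagLeffler, tsum_eq_single 0 (fun k hk => by simp [zero_pow hk])]
  norm_num

lemma ml_rec (hγ0 : 0 < γ) (hγ1 : γ ≤ 1) (hβ : 0 < β) (z : ℝ) :
    mittagLeffler γ β z = 1 / Real.Gamma β + z * mittagLeffler γ (β + γ) z := by
  rw [mittagLeffler, Summable.tsum_eq_zero_add (summable_ml hγ0 hγ1 hβ z)]
  norm_num
  congr 1
  rw [mittagLeffler, ← tsum_mul_left]
  apply tsum_congr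
  intro j
  have harg : γ * ((j:ℝ) + 1) + β = γ * j + (β + γ) := by ring
  push_cast
  rw [harg, pow_succ]
  ring

lemma ml_cont (hγ0 : 0 < γ) (hγ1 : γ ≤ 1) (hβ : 0 < β) :
    Continuous (fun x : ℝ => mittagLeffler γ β x) := by
  rw [continuous_iff_continuousAt]
  intro x
  have hmem : Set.Icc (-(|x|+1)) (|x|+1) ∈ nhds x :=
    Icc_mem_nhds (by cases abs_cases x <;> linarith) (by linarith [le_abs_self x])
  apply ContinuousOn.continuousAt _ hmem
  simp only [mittagLeffler]
  apply continuousOn_tsum (u := fun k : ℕ => (|x|+1) ^ k / Real.Gamma (γ * k + β))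
  · exact fun k => ((continuous_pow k).div_const _).continuousOn
  · exact summable_ml hγ0 hγ1 hβ _
  · intro k y hy
    have hΓ : 0 < Real.Gamma (γ * k + β) := Real.Gamma_pos_of_pos (by positivity)
    rw [Real.norm_eq_abs, abs_div, abs_of_pos hΓ, abs_pow]
    have h1 : |y| ^ k ≤ (|x|+1) ^ k := pow_le_pow_left₀ (abs_nonneg y) (abs_le.2 ⟨hy.1, hy.2⟩) k
    gcongr

lemma realBeta {u v : ℝ} (hu : 0 < u) (hv : 0 < v) :
    ∫ s in (0:ℝ)..1, s ^ (u - 1) * (1 - s) ^ (v - 1)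
      = Real.Gamma u * Real.Gamma v / Real.Gamma (u + v) := by
  have h := Complex.Gamma_mul_Gamma_eq_betaIntegral (s := (u:ℂ)) (t := (v:ℂ))
    (by simpa using hu) (by simpa using hv)
  have hβ : Complex.betaIntegral u v
      = ((∫ s in (0:ℝ)..1, s ^ (u - 1) * (1 - s) ^ (v - 1) : ℝ) : ℂ) := by
    rw [Complex.betaIntegral, ← intervalIntegral.integral_ofReal]
    apply intervalIntegral.integral_congr
    intro s hs
    rw [uIcc_of_le (by norm_num : (0:ℝ) ≤ 1)] at hs
    push_cast
    rw [show ((u:ℂ) - 1) = ((u - 1 : ℝ) : ℂ) by push_cast; ring,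
      show ((v:ℂ) - 1) = ((v - 1 : ℝ) : ℂ) by push_cast; ring,
      show ((1:ℂ) - (s:ℂ)) = ((1 - s : ℝ) : ℂ) by push_cast; ring,
      ← Complex.ofReal_cpow hs.1, ← Complex.ofReal_cpow (by linarith [hs.2] : (0:ℝ) ≤ 1 - s)]
  rw [hβ] at h
  have hGpos : 0 < Real.Gamma (u + v) := Real.Gamma_pos_of_pos (by linarith)
  have h2 : Real.Gamma u * Real.Gamma v
      = Real.Gamma (u + v) * ∫ s in (0:ℝ)..1, s ^ (u - 1) * (1 - s) ^ (v - 1) := by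
    have hcast : ((u:ℂ) + (v:ℂ)) = ((u + v : ℝ) : ℂ) := by push_cast; ring
    rw [hcast, Complex.Gamma_ofReal, Complex.Gamma_ofReal, Complex.Gamma_ofReal] at h
    exact_mod_cast h
  field_simp
  linarith [h2]

lemma realBeta_scaled {u v t : ℝ} (hu : 0 < u) (hv : 0 < v) (ht : 0 < t) :
    ∫ s in (0:ℝ)..t, s ^ (u - 1) * (t - s) ^ (v - 1)
      = Real.Gamma u * Real.Gamma v / Real.Gamma (u + v) * t ^ (u + v - 1) := by
  have h1 : ∫ s in (0:ℝ)..t, s ^ (u - 1) * (t - s) ^ (v - 1)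
      = t * ∫ x in (0:ℝ)..1, (t*x) ^ (u - 1) * (t - t*x) ^ (v - 1) := by
    rw [intervalIntegral.integral_comp_mul_left (fun s => s ^ (u - 1) * (t - s) ^ (v - 1)) ht.ne']
    rw [mul_zero, mul_one, smul_eq_mul, ← mul_assoc, mul_inv_cancel₀ ht.ne', one_mul]
  rw [h1]
  have h2 : ∫ x in (0:ℝ)..1, (t*x) ^ (u - 1) * (t - t*x) ^ (v - 1)
      = t ^ (u-1) * t ^ (v-1) * ∫ x in (0:ℝ)..1, x ^ (u - 1) * (1 - x) ^ (v - 1) := by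
    rw [← intervalIntegral.integral_const_mul]
    apply intervalIntegral.integral_congr
    intro x hx
    rw [uIcc_of_le (by norm_num : (0:ℝ) ≤ 1)] at hx
    simp only []
    have h1x : t - t*x = t * (1-x) := by ring
    rw [h1x, Real.mul_rpow ht.le hx.1, Real.mul_rpow ht.le (by linarith [hx.2])]
    ring
  rw [h2, realBeta hu hv]
  rw [show u + v - 1 = 1 + ((u-1) + (v-1)) by ring, Real.rpow_add ht, Real.rpow_add ht,
    Real.rpow_one]
  ring

lemma betaKernel_intble {u v t : ℝ} (hu : 0 < u) (hv : 0 < v) (ht : 0 < t) :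
    IntervalIntegrable (fun s => s ^ (u - 1) * (t - s) ^ (v - 1)) volume 0 t := by
  have h1 : IntervalIntegrable (fun s => s ^ (u - 1) * (t - s) ^ (v - 1)) volume 0 (t/2) := by
    apply (intervalIntegral.intervalIntegrable_rpow' (by linarith : (-1:ℝ) < u - 1)).mul_continuousOn
    rw [uIcc_of_le (by linarith : (0:ℝ) ≤ t/2)]
    apply ContinuousOn.rpow_const (by fun_prop)
    intro s hs
    exact Or.inl (by simp only [Icc] at hs; intro h; simp at hs; linarith [hs.2, sub_eq_zero.1 h])
  have h2 : IntervalIntegrable (fun s => s ^ (u - 1) * (t - s) ^ (v - 1)) volume (t/2) t := by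
    have hker : IntervalIntegrable (fun s => (t - s) ^ (v - 1)) volume (t/2) t := by
      have := (intervalIntegral.intervalIntegrable_rpow'
        (by linarith : (-1:ℝ) < v - 1) (a := 0) (b := t/2)).comp_sub_left t
      rw [sub_zero, show t - t/2 = t/2 by ring] at this
      exact this.symm
    apply hker.continuousOn_mul
    rw [uIcc_of_le (by linarith : t/2 ≤ t)]
    apply ContinuousOn.rpow_const continuousOn_id
    intro s hs
    refine Or.inl (fun h => ?_)
    simp only [id_eq] at h
    rw [h] at hs
    simp at hs
    linarith [hs.1]
  exact h1.trans h2

lemma ml_swap (hγ0 : 0 < γ) (hγ1 : γ ≤ 1) (hβ : 0 < β) {t : ℝ} (ht : 0 < t) :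
    ∫ s in (0:ℝ)..t, s ^ (β - 1) * (t - s) ^ (γ - 1) * mittagLeffler γ β (-(s ^ γ))
      = Real.Gamma γ * (t ^ (β + γ - 1) * mittagLeffler γ (β + γ) (-(t ^ γ))) := by
  have hujβ : ∀ j : ℕ, (0:ℝ) < γ * j + β := fun j => by positivity
  have hΓjβ : ∀ j : ℕ, 0 < Real.Gamma (γ * j + β) := fun j => Real.Gamma_pos_of_pos (hujβ j)
  have hΓγ : 0 < Real.Gamma γ := Real.Gamma_pos_of_pos hγ0
  set F : ℕ → ℝ → ℝ :=
    fun j s => s ^ (β - 1) * (t - s) ^ (γ - 1) * ((-(s ^ γ)) ^ j / Real.Gamma (γ * j + β))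
    with hFdef
  set c : ℕ → ℝ := fun j => (-1) ^ j / Real.Gamma (γ * j + β) with hcdef
  set ker : ℕ → ℝ → ℝ := fun j s => s ^ (γ * j + β - 1) * (t - s) ^ (γ - 1) with hkerdef
  have hEq : ∀ j : ℕ, EqOn (F j) (fun s => c j * ker j s) (Ioc 0 t) := by
    intro j s hs
    have hs0 : (0:ℝ) < s := hs.1
    simp only [F, c, ker]
    rw [neg_pow, ← Real.rpow_natCast (s ^ γ) j, ← Real.rpow_mul hs0.le,
      show γ * (j:ℝ) + β - 1 = γ * (j:ℝ) + (β - 1) by ring, Real.rpow_add hs0]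
    ring
  have hker_int : ∀ j : ℕ, IntervalIntegrable (ker j) volume 0 t :=
    fun j => betaKernel_intble (hujβ j) hγ0 ht
  have hker_nonneg : ∀ j : ℕ, ∀ s ∈ Ioc (0:ℝ) t, 0 ≤ ker j s := by
    intro j s hs
    exact mul_nonneg (Real.rpow_nonneg hs.1.le _) (Real.rpow_nonneg (by linarith [hs.2]) _)
  have hF_int : ∀ j : ℕ, IntegrableOn (F j) (Ioc 0 t) volume := by
    intro j
    exact (((hker_int j).const_mul (c j)).1).congr_fun (fun s hs => (hEq j hs).symm)
      measurableSet_Ioc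
  have hbeta : ∀ j : ℕ, ∫ s in Ioc (0:ℝ) t, ker j s
      = Real.Gamma (γ * j + β) * Real.Gamma γ / Real.Gamma (γ * j + β + γ)
        * t ^ (γ * j + β + γ - 1) := by
    intro j
    rw [← intervalIntegral.integral_of_le ht.le]
    exact realBeta_scaled (hujβ j) hγ0 ht
  have hpow : ∀ j : ℕ, t ^ (γ * (j:ℝ) + β + γ - 1) = (t ^ γ) ^ j * t ^ (β + γ - 1) := by
    intro j
    rw [show γ * (j:ℝ) + β + γ - 1 = γ * (j:ℝ) + (β + γ - 1) by ring, Real.rpow_add ht,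
      Real.rpow_mul ht.le, Real.rpow_natCast]
  have hnorm : ∀ j : ℕ, ∫ s in Ioc (0:ℝ) t, ‖F j s‖
      = Real.Gamma γ * t ^ (β + γ - 1) * ((t ^ γ) ^ j / Real.Gamma (γ * j + (β + γ))) := by
    intro j
    have : ∀ s ∈ Ioc (0:ℝ) t, ‖F j s‖ = (1 / Real.Gamma (γ * j + β)) * ker j s := by
      intro s hs
      rw [hEq j hs]
      simp only [c]
      rw [Real.norm_eq_abs, abs_mul, abs_div, abs_pow, abs_neg, abs_one, one_pow,
        abs_of_pos (hΓjβ j), abs_of_nonneg (hker_nonneg j s hs)]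
    rw [setIntegral_congr_fun measurableSet_Ioc this, MeasureTheory.integral_const_mul, hbeta j,
      show γ * (j:ℝ) + (β + γ) = γ * (j:ℝ) + β + γ by ring, hpow j]
    field_simp
  have hβγ : (0:ℝ) < β + γ := by linarith
  have hsummable : Summable (fun j : ℕ => ∫ s in Ioc (0:ℝ) t, ‖F j s‖) := by
    apply Summable.congr (((summable_ml hγ0 hγ1 hβγ (t ^ γ)).mul_left
      (Real.Gamma γ * t ^ (β + γ - 1))))
    intro j
    rw [hnorm j]
  have hswap := MeasureTheory.integral_tsum_of_summable_integral_norm hF_int hsummable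
  have hLHS : ∫ s in (0:ℝ)..t, s ^ (β - 1) * (t - s) ^ (γ - 1) * mittagLeffler γ β (-(s ^ γ))
      = ∫ s in Ioc (0:ℝ) t, ∑' j : ℕ, F j s := by
    rw [intervalIntegral.integral_of_le ht.le]
    apply setIntegral_congr_fun measurableSet_Ioc
    intro s _
    simp only [mittagLeffler]
    rw [← tsum_mul_left]
  rw [hLHS, ← hswap]
  have hterm : ∀ j : ℕ, ∫ s in Ioc (0:ℝ) t, F j s
      = (Real.Gamma γ * t ^ (β + γ - 1)) * ((-(t ^ γ)) ^ j / Real.Gamma (γ * j + (β + γ))) := by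
    intro j
    rw [setIntegral_congr_fun measurableSet_Ioc (hEq j), MeasureTheory.integral_const_mul, hbeta j]
    simp only [c]
    rw [show γ * (j:ℝ) + (β + γ) = γ * (j:ℝ) + β + γ by ring, hpow j, neg_pow]
    field_simp
    ring
  rw [tsum_congr hterm, tsum_mul_left]
  simp only [mittagLeffler]
  ring

-- Pointwise kernel comparison (log-convexity of the kernel).
lemma ker_comp (hγ0 : 0 < γ) (hγ1 : γ < 1) {τ t0 s : ℝ} (hτ : 0 < τ) (hτt0 : τ ≤ t0)
    (hs : 0 ≤ s) (hsτ : s < τ) :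
    t0 ^ (1-γ) * (s ^ (γ-1) * (t0 - s) ^ (γ-1)) ≤ τ ^ (1-γ) * (s ^ (γ-1) * (τ - s) ^ (γ-1)) := by
  have ht0 : 0 < t0 := lt_of_lt_of_le hτ hτt0
  rcases hs.eq_or_lt with rfl | hs0
  · rw [Real.zero_rpow (by linarith : γ - 1 ≠ 0)]
    simp
  have heq : ∀ b : ℝ, 0 < b → s < b → b ^ (1-γ) * (b - s) ^ (γ-1) = ((b - s)/b) ^ (γ-1) := by
    intro b hb hsb
    rw [Real.div_rpow (by linarith) hb.le, show (1:ℝ) - γ = -(γ-1) by ring,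
      Real.rpow_neg hb.le]
    field_simp
  have h1 : t0 ^ (1-γ) * (s ^ (γ-1) * (t0 - s) ^ (γ-1))
      = s ^ (γ-1) * (((t0 - s)/t0) ^ (γ-1)) := by
    rw [← heq t0 ht0 (lt_of_lt_of_le hsτ hτt0)]; ring
  have h2 : τ ^ (1-γ) * (s ^ (γ-1) * (τ - s) ^ (γ-1))
      = s ^ (γ-1) * (((τ - s)/τ) ^ (γ-1)) := by
    rw [← heq τ hτ hsτ]; ring
  rw [h1, h2]
  apply mul_le_mul_of_nonneg_left ?_ (Real.rpow_nonneg hs0.le _)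
  apply Real.rpow_le_rpow_of_nonpos (div_pos (by linarith) hτ) ?_ (by linarith)
  rw [div_le_div_iff₀ hτ ht0]
  nlinarith

/-- Positivity of `E_{γ,γ}(-x)` for `0 < γ < 1`. -/
lemma g_pos (hγ0 : 0 < γ) (hγ1 : γ < 1) :
    ∀ x : ℝ, 0 ≤ x → 0 < mittagLeffler γ γ (-x) := by
  have hΓγ : 0 < Real.Gamma γ := Real.Gamma_pos_of_pos hγ0
  have hrpow_cont : Continuous fun s : ℝ => s ^ γ := by
    apply continuous_iff_continuousAt.2
    intro y
    exact Real.continuousAt_rpow_const y γ (Or.inr hγ0.le)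
  set h : ℝ → ℝ := fun s => mittagLeffler γ γ (-(s ^ γ)) with hhdef
  have hcont : Continuous h := (ml_cont hγ0 hγ1.le hγ0).comp (continuous_neg.comp hrpow_cont)
  have h0 : h 0 = 1 / Real.Gamma γ := by
    simp only [h]
    rw [Real.zero_rpow hγ0.ne', neg_zero, ml_zero hγ0]
  -- the Volterra identity
  have hId : ∀ τ : ℝ, 0 < τ → ∫ s in (0:ℝ)..τ, s ^ (γ-1) * (τ-s) ^ (γ-1) * h s
      = τ ^ (γ-1) * (1 - Real.Gamma γ * h τ) := by
    intro τ hτ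
    have hswap := ml_swap hγ0 hγ1.le hγ0 hτ
    have hrec := ml_rec hγ0 hγ1.le hγ0 (-(τ ^ γ))
    have hM : τ ^ γ * mittagLeffler γ (γ + γ) (-(τ ^ γ)) = 1 / Real.Gamma γ - h τ := by
      simp only [h]
      linarith [hrec]
    have hτpow : τ ^ (γ+γ-1) = τ ^ γ * τ ^ (γ-1) := by
      rw [show γ+γ-1 = γ + (γ-1) by ring, Real.rpow_add hτ]
    have hLHS : ∫ s in (0:ℝ)..τ, s ^ (γ-1) * (τ-s) ^ (γ-1) * h s
        = ∫ s in (0:ℝ)..τ, s ^ (γ-1) * (τ-s) ^ (γ-1) * mittagLeffler γ γ (-(s ^ γ)) := rfl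
    have hM2 : Real.Gamma γ * (τ ^ γ * mittagLeffler γ (γ + γ) (-(τ ^ γ)))
        = 1 - Real.Gamma γ * h τ := by
      rw [hM]
      field_simp
    rw [hLHS, hswap, hτpow]
    linear_combination τ ^ (γ-1) * hM2
  by_contra hcon
  push_neg at hcon
  obtain ⟨z, hz0, hz⟩ := hcon
  have hzpos : 0 < z := by
    rcases hz0.eq_or_lt with rfl | hlt
    · rw [neg_zero, ml_zero hγ0] at hz
      have := one_div_pos.2 hΓγ
      linarith
    · exact hlt
  set S := {u : ℝ | 0 ≤ u ∧ h u ≤ 0} with hSdef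
  have hS_ne : S.Nonempty := by
    refine ⟨z ^ (1/γ), Real.rpow_nonneg hzpos.le _, ?_⟩
    simp only [h]
    rw [← Real.rpow_mul hzpos.le, one_div, inv_mul_cancel₀ hγ0.ne', Real.rpow_one]
    exact hz
  have hS_bdd : BddBelow S := ⟨0, fun u hu => hu.1⟩
  have hS_closed : IsClosed S := by
    apply IsClosed.inter
    · exact isClosed_le continuous_const continuous_id
    · exact isClosed_le hcont continuous_const
  set t0 := sInf S with ht0def
  have ht0S : t0 ∈ S := hS_closed.csInf_mem hS_ne hS_bdd
  have ht0pos : 0 < t0 := by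
    rcases ht0S.1.eq_or_lt with heq | hlt
    · exfalso
      have := ht0S.2
      rw [← heq, h0] at this
      have := one_div_pos.2 hΓγ
      linarith
    · exact hlt
  have hposlt : ∀ u : ℝ, 0 ≤ u → u < t0 → 0 < h u := by
    intro u hu hut0
    by_contra hle
    push_neg at hle
    exact absurd (csInf_le hS_bdd ⟨hu, hle⟩) (not_le.2 hut0)
  -- integrability of the main kernel
  have kert0 : IntervalIntegrable (fun s => s ^ (γ-1) * (t0-s) ^ (γ-1)) volume 0 t0 :=
    betaKernel_intble hγ0 hγ0 ht0pos
  have kert0h : IntervalIntegrable (fun s => s ^ (γ-1) * (t0-s) ^ (γ-1) * h s) volume 0 t0 :=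
    kert0.mul_continuousOn hcont.continuousOn
  have hsubIcc : ∀ a b : ℝ, 0 ≤ a → b ≤ t0 → a ≤ b → uIcc a b ⊆ uIcc 0 t0 := by
    intro a b ha hb hab
    rw [uIcc_of_le hab, uIcc_of_le (le_trans ha (le_trans hab hb))]
    exact Icc_subset_Icc ha hb
  -- the key step inequality
  have hstep : ∀ τ : ℝ, 0 < τ → τ < t0 →
      Real.Gamma γ * h τ ≤ t0 ^ (1-γ) * ∫ s in τ..t0, s ^ (γ-1) * (t0-s) ^ (γ-1) * h s := by
    intro τ hτ0 hτt0
    have hττ : τ ^ (1-γ) * τ ^ (γ-1) = 1 := by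
      rw [← Real.rpow_add hτ0]; norm_num
    have ht00 : t0 ^ (1-γ) * t0 ^ (γ-1) = 1 := by
      rw [← Real.rpow_add ht0pos]; norm_num
    have kerτ : IntervalIntegrable (fun s => s ^ (γ-1) * (τ-s) ^ (γ-1) * h s) volume 0 τ :=
      (betaKernel_intble hγ0 hγ0 hτ0).mul_continuousOn hcont.continuousOn
    have ksub1 : IntervalIntegrable (fun s => s ^ (γ-1) * (t0-s) ^ (γ-1) * h s) volume 0 τ :=
      kert0h.mono_set (hsubIcc 0 τ le_rfl hτt0.le hτ0.le)
    have ksub2 : IntervalIntegrable (fun s => s ^ (γ-1) * (t0-s) ^ (γ-1) * h s) volume τ t0 :=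
      kert0h.mono_set (hsubIcc τ t0 hτ0.le le_rfl hτt0.le)
    have hcomp : t0 ^ (1-γ) * ∫ s in (0:ℝ)..τ, s ^ (γ-1) * (t0-s) ^ (γ-1) * h s
        ≤ τ ^ (1-γ) * ∫ s in (0:ℝ)..τ, s ^ (γ-1) * (τ-s) ^ (γ-1) * h s := by
      rw [← intervalIntegral.integral_const_mul, ← intervalIntegral.integral_const_mul]
      apply intervalIntegral.integral_mono_ae_restrict hτ0.le
        (ksub1.const_mul _) (kerτ.const_mul _)
      have hae : ∀ᵐ s ∂(volume.restrict (Icc (0:ℝ) τ)), s ≠ τ := by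
        refine (MeasureTheory.ae_iff).2 ?_
        rw [show {a : ℝ | ¬a ≠ τ} = {τ} by ext a; simp]
        have hz0' : (volume.restrict (Icc (0:ℝ) τ)) {τ} = 0 :=
          le_antisymm ((Measure.restrict_apply_le _ _).trans_eq Real.volume_singleton)
            zero_le
        exact measure_mono_null (fun a ha => ha) hz0'
      filter_upwards [MeasureTheory.ae_restrict_mem measurableSet_Icc, hae] with s hsmem hsne
      have hsτ : s < τ := lt_of_le_of_ne hsmem.2 hsne
      have hh : 0 ≤ h s := (hposlt s hsmem.1 (hsτ.trans hτt0)).le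
      calc t0 ^ (1-γ) * (s ^ (γ-1) * (t0-s) ^ (γ-1) * h s)
          = (t0 ^ (1-γ) * (s ^ (γ-1) * (t0-s) ^ (γ-1))) * h s := by ring
        _ ≤ (τ ^ (1-γ) * (s ^ (γ-1) * (τ-s) ^ (γ-1))) * h s :=
            mul_le_mul_of_nonneg_right (ker_comp hγ0 hγ1 hτ0 hτt0.le hsmem.1 hsτ) hh
        _ = τ ^ (1-γ) * (s ^ (γ-1) * (τ-s) ^ (γ-1) * h s) := by ring
    have hsplit := intervalIntegral.integral_add_adjacent_intervals ksub1 ksub2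
    have hsplit2 : (t0 ^ (1-γ) * ∫ s in (0:ℝ)..τ, s ^ (γ-1) * (t0-s) ^ (γ-1) * h s)
        + (t0 ^ (1-γ) * ∫ s in τ..t0, s ^ (γ-1) * (t0-s) ^ (γ-1) * h s)
        = t0 ^ (1-γ) * ∫ s in (0:ℝ)..t0, s ^ (γ-1) * (t0-s) ^ (γ-1) * h s := by
      rw [← hsplit, mul_add]
    have e1 : Real.Gamma γ * h τ
        = 1 - τ ^ (1-γ) * ∫ s in (0:ℝ)..τ, s ^ (γ-1) * (τ-s) ^ (γ-1) * h s := by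
      rw [hId τ hτ0]
      linear_combination (1 - Real.Gamma γ * h τ) * hττ
    have e2 : t0 ^ (1-γ) * ∫ s in (0:ℝ)..t0, s ^ (γ-1) * (t0-s) ^ (γ-1) * h s
        = 1 - Real.Gamma γ * h t0 := by
      rw [hId t0 ht0pos]
      linear_combination (1 - Real.Gamma γ * h t0) * ht00
    have hht0 : Real.Gamma γ * h t0 ≤ 0 := mul_nonpos_of_nonneg_of_nonpos hΓγ.le ht0S.2
    linarith [e1, hcomp, hsplit2, e2, hht0]
  -- choose t1 < t0 with a small tail integral
  have ht0γ : 0 < t0 ^ γ := Real.rpow_pos_of_pos ht0pos _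
  set A := min 1 (γ * Real.Gamma γ / (4 * t0 ^ γ)) with hAdef
  have hA0 : 0 < A := lt_min one_pos (by positivity)
  set ε := min (1/2 : ℝ) (A ^ (1/γ)) with hεdef
  have hε0 : 0 < ε := lt_min (by norm_num) (Real.rpow_pos_of_pos hA0 _)
  have hεhalf : ε ≤ 1/2 := min_le_left _ _
  have hεγA : ε ^ γ ≤ A := by
    calc ε ^ γ ≤ (A ^ (1/γ)) ^ γ := Real.rpow_le_rpow hε0.le (min_le_right _ _) hγ0.le
      _ = A := by
          rw [← Real.rpow_mul hA0.le, one_div, inv_mul_cancel₀ hγ0.ne', Real.rpow_one]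
  set t1 := t0 * (1 - ε) with ht1def
  have ht1pos : 0 < t1 := mul_pos ht0pos (by linarith)
  have ht1lt : t1 < t0 := by nlinarith
  have hkersub : IntervalIntegrable (fun s => s ^ (γ-1) * (t0-s) ^ (γ-1)) volume t1 t0 :=
    kert0.mono_set (hsubIcc t1 t0 ht1pos.le le_rfl ht1lt.le)
  have hkerconst : IntervalIntegrable (fun s => t1 ^ (γ-1) * (t0-s) ^ (γ-1)) volume t1 t0 := by
    have hbase := (intervalIntegral.intervalIntegrable_rpow'
      (by linarith : (-1:ℝ) < γ - 1) (a := 0) (b := t0 - t1)).comp_sub_left t0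
    rw [sub_zero, show t0 - (t0 - t1) = t1 by ring] at hbase
    exact (hbase.symm).const_mul _
  have htail : ∫ s in t1..t0, s ^ (γ-1) * (t0-s) ^ (γ-1)
      ≤ t1 ^ (γ-1) * ((t0-t1) ^ γ / γ) := by
    have hpt : ∀ s ∈ Icc t1 t0, s ^ (γ-1) * (t0-s) ^ (γ-1)
        ≤ t1 ^ (γ-1) * (t0-s) ^ (γ-1) := by
      intro s hs
      exact mul_le_mul_of_nonneg_right
        (Real.rpow_le_rpow_of_nonpos ht1pos hs.1 (by linarith))
        (Real.rpow_nonneg (by linarith [hs.2]) _)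
    calc ∫ s in t1..t0, s ^ (γ-1) * (t0-s) ^ (γ-1)
        ≤ ∫ s in t1..t0, t1 ^ (γ-1) * (t0-s) ^ (γ-1) :=
          intervalIntegral.integral_mono_on ht1lt.le hkersub hkerconst hpt
      _ = t1 ^ (γ-1) * ∫ s in t1..t0, (t0-s) ^ (γ-1) :=
          intervalIntegral.integral_const_mul _ _
      _ = t1 ^ (γ-1) * ((t0-t1) ^ γ / γ) := by
          rw [intervalIntegral.integral_comp_sub_left (fun u => u ^ (γ-1)) t0, sub_self,
            integral_rpow (Or.inl (by linarith : (-1:ℝ) < γ - 1)),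
            Real.zero_rpow (by intro hcontra; linarith [hcontra] : γ - 1 + 1 ≠ 0)]
          norm_num
  have hsmall : t0 ^ (1-γ) * (t1 ^ (γ-1) * ((t0-t1) ^ γ / γ)) ≤ Real.Gamma γ / 2 := by
    have h1ε : (1:ℝ)/2 ≤ 1 - ε := by linarith
    have ht1eq : t1 ^ (γ-1) = t0 ^ (γ-1) * (1-ε) ^ (γ-1) := by
      rw [ht1def, Real.mul_rpow ht0pos.le (by linarith)]
    have ht0t1 : (t0 - t1) ^ γ = t0 ^ γ * ε ^ γ := by
      rw [show t0 - t1 = t0 * ε by rw [ht1def]; ring, Real.mul_rpow ht0pos.le hε0.le]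
    have h2 : (1-ε) ^ (γ-1) ≤ 2 := by
      calc (1-ε) ^ (γ-1) ≤ ((1:ℝ)/2) ^ (γ-1) :=
            Real.rpow_le_rpow_of_nonpos (by norm_num) h1ε (by linarith)
        _ = 2 ^ (1-γ) := by
            rw [show (1/2:ℝ) = 2⁻¹ by norm_num, Real.inv_rpow (by norm_num),
              ← Real.rpow_neg (by norm_num)]
            norm_num
        _ ≤ 2 ^ (1:ℝ) :=
            Real.rpow_le_rpow_of_exponent_le (by norm_num) (by linarith)
        _ = 2 := Real.rpow_one 2
    have hprod : t0 ^ (1-γ) * t0 ^ (γ-1) = 1 := by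
      rw [← Real.rpow_add ht0pos]; norm_num
    have hεA : ε ^ γ ≤ γ * Real.Gamma γ / (4 * t0 ^ γ) :=
      le_trans hεγA (min_le_right _ _)
    have h1εnn : (0:ℝ) ≤ (1-ε) ^ (γ-1) := Real.rpow_nonneg (by linarith) _
    calc t0 ^ (1-γ) * (t1 ^ (γ-1) * ((t0-t1) ^ γ / γ))
        = (t0 ^ (1-γ) * t0 ^ (γ-1)) * ((1-ε) ^ (γ-1) * (t0 ^ γ * ε ^ γ / γ)) := by
          rw [ht1eq, ht0t1]; ring
      _ = (1-ε) ^ (γ-1) * (t0 ^ γ * ε ^ γ / γ) := by rw [hprod]; ring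
      _ ≤ 2 * (t0 ^ γ * (γ * Real.Gamma γ / (4 * t0 ^ γ)) / γ) := by
          apply mul_le_mul h2 ?_ (by positivity) (by norm_num)
          gcongr
      _ = Real.Gamma γ / 2 := by field_simp; ring
  -- the maximum of h on [t1, t0]
  obtain ⟨tm, htm_mem, htm_max⟩ :=
    isCompact_Icc.exists_isMaxOn (nonempty_Icc.2 ht1lt.le) hcont.continuousOn
  have hMt1 : h t1 ≤ h tm := htm_max (left_mem_Icc.2 ht1lt.le)
  have hMpos : 0 < h tm := lt_of_lt_of_le (hposlt t1 ht1pos.le ht1lt) hMt1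
  have htmlt : tm < t0 := by
    rcases htm_mem.2.eq_or_lt with heq | hlt
    · exfalso
      rw [heq] at hMpos
      linarith [ht0S.2]
    · exact hlt
  have htm0 : 0 < tm := lt_of_lt_of_le ht1pos htm_mem.1
  have hstepm := hstep tm htm0 htmlt
  have hkerh_sub : IntervalIntegrable (fun s => s ^ (γ-1) * (t0-s) ^ (γ-1) * h s)
      volume tm t0 := kert0h.mono_set (hsubIcc tm t0 htm0.le le_rfl htmlt.le)
  have hker_sub2 : IntervalIntegrable (fun s => s ^ (γ-1) * (t0-s) ^ (γ-1)) volume tm t0 :=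
    kert0.mono_set (hsubIcc tm t0 htm0.le le_rfl htmlt.le)
  have b1 : ∫ s in tm..t0, s ^ (γ-1) * (t0-s) ^ (γ-1) * h s
      ≤ (∫ s in tm..t0, s ^ (γ-1) * (t0-s) ^ (γ-1)) * h tm := by
    rw [← intervalIntegral.integral_mul_const]
    apply intervalIntegral.integral_mono_on htmlt.le hkerh_sub (hker_sub2.mul_const _)
    intro s hs
    have hsM : h s ≤ h tm := htm_max ⟨le_trans htm_mem.1 hs.1, hs.2⟩
    have hknn : 0 ≤ s ^ (γ-1) * (t0-s) ^ (γ-1) :=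
      mul_nonneg (Real.rpow_nonneg (le_trans htm0.le hs.1) _)
        (Real.rpow_nonneg (by linarith [hs.2]) _)
    exact mul_le_mul_of_nonneg_left hsM hknn
  have b2 : ∫ s in tm..t0, s ^ (γ-1) * (t0-s) ^ (γ-1)
      ≤ ∫ s in t1..t0, s ^ (γ-1) * (t0-s) ^ (γ-1) := by
    apply intervalIntegral.integral_mono_interval htm_mem.1 htmlt.le le_rfl ?_ hkersub
    filter_upwards [MeasureTheory.ae_restrict_mem measurableSet_Ioc] with s hs
    exact mul_nonneg (Real.rpow_nonneg (le_trans ht1pos.le hs.1.le) _)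
      (Real.rpow_nonneg (by linarith [hs.2]) _)
  have ht01γ : (0:ℝ) ≤ t0 ^ (1-γ) := Real.rpow_nonneg ht0pos.le _
  have chain : Real.Gamma γ * h tm ≤ (Real.Gamma γ / 2) * h tm := by
    calc Real.Gamma γ * h tm
        ≤ t0 ^ (1-γ) * ∫ s in tm..t0, s ^ (γ-1) * (t0-s) ^ (γ-1) * h s := hstepm
      _ ≤ t0 ^ (1-γ) * ((∫ s in tm..t0, s ^ (γ-1) * (t0-s) ^ (γ-1)) * h tm) :=
          mul_le_mul_of_nonneg_left b1 ht01γ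
      _ ≤ t0 ^ (1-γ) * ((∫ s in t1..t0, s ^ (γ-1) * (t0-s) ^ (γ-1)) * h tm) :=
          mul_le_mul_of_nonneg_left (mul_le_mul_of_nonneg_right b2 hMpos.le) ht01γ
      _ ≤ t0 ^ (1-γ) * ((t1 ^ (γ-1) * ((t0-t1) ^ γ / γ)) * h tm) :=
          mul_le_mul_of_nonneg_left (mul_le_mul_of_nonneg_right htail hMpos.le) ht01γ
      _ = (t0 ^ (1-γ) * (t1 ^ (γ-1) * ((t0-t1) ^ γ / γ))) * h tm := by ring
      _ ≤ (Real.Gamma γ / 2) * h tm :=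
          mul_le_mul_of_nonneg_right hsmall hMpos.le
  nlinarith [chain, hMpos, hΓγ]

lemma g_integral (hγ0 : 0 < γ) (hγ1 : γ ≤ 1) {x : ℝ} (hx : 0 ≤ x) :
    ∫ y in (0:ℝ)..x, mittagLeffler γ γ (-y) = γ * (1 - mittagLeffler γ 1 (-x)) := by
  have hΓj : ∀ j : ℕ, 0 < Real.Gamma (γ * j + γ) := fun j => Real.Gamma_pos_of_pos (by positivity)
  rcases eq_or_lt_of_le hx with rfl | hx0
  · rw [intervalIntegral.integral_same, neg_zero, ml_rec hγ0 hγ1 one_pos 0]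
    simp [Real.Gamma_one]
  set F : ℕ → ℝ → ℝ := fun j y => (-y) ^ j / Real.Gamma (γ * j + γ) with hFdef
  have hFc : ∀ j : ℕ, Continuous (F j) := by
    intro j; simp only [F]
    exact ((continuous_neg.pow j).div_const _)
  have hF_int : ∀ j : ℕ, IntegrableOn (F j) (Ioc 0 x) volume := fun j =>
    (hFc j).integrableOn_Ioc
  have hval : ∀ j : ℕ, ∫ y in Ioc (0:ℝ) x, y ^ j = x ^ (j+1) / (j+1) := by
    intro j
    rw [← intervalIntegral.integral_of_le hx, integral_pow]
    simp
  have hnorm : ∀ j : ℕ, ∫ y in Ioc (0:ℝ) x, ‖F j y‖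
      = (x ^ (j+1) / (j+1)) / Real.Gamma (γ * j + γ) := by
    intro j
    have heq : ∀ y ∈ Ioc (0:ℝ) x, ‖F j y‖ = y ^ j * (1 / Real.Gamma (γ * j + γ)) := by
      intro y hy
      simp only [F]
      rw [Real.norm_eq_abs, abs_div, abs_pow, abs_neg, abs_of_pos hy.1, abs_of_pos (hΓj j)]
      ring
    rw [setIntegral_congr_fun measurableSet_Ioc heq, MeasureTheory.integral_mul_const, hval]
    ring
  have hsummable : Summable (fun j : ℕ => ∫ y in Ioc (0:ℝ) x, ‖F j y‖) := by
    apply Summable.of_nonneg_of_le (fun j => by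
      rw [hnorm j]; positivity)
      (fun j => ?_) ((summable_ml hγ0 hγ1 hγ0 x).mul_left x)
    rw [hnorm j]
    have h1 : (1:ℝ) ≤ (j:ℝ) + 1 := by simp
    calc x ^ (j+1) / ((j:ℝ)+1) / Real.Gamma (γ * j + γ)
        = (x ^ (j+1) / Real.Gamma (γ * j + γ)) / ((j:ℝ)+1) := by ring
      _ ≤ x ^ (j+1) / Real.Gamma (γ * j + γ) / 1 := by
          apply div_le_div_of_nonneg_left (by positivity) (by positivity) h1
      _ = x * (x ^ j / Real.Gamma (γ * j + γ)) := by rw [div_one, pow_succ]; ring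
  have hswap := MeasureTheory.integral_tsum_of_summable_integral_norm hF_int hsummable
  have hLHS : ∫ y in (0:ℝ)..x, mittagLeffler γ γ (-y) = ∫ y in Ioc (0:ℝ) x, ∑' j : ℕ, F j y := by
    rw [intervalIntegral.integral_of_le hx]
    apply setIntegral_congr_fun measurableSet_Ioc
    intro y _
    simp only [mittagLeffler, F]
  rw [hLHS, ← hswap]
  have hterm : ∀ j : ℕ, ∫ y in Ioc (0:ℝ) x, F j y
      = (γ * x) * ((-x) ^ j / Real.Gamma (γ * j + (1 + γ))) := by
    intro j
    have heq : ∀ y ∈ Ioc (0:ℝ) x, F j y = y ^ j * ((-1) ^ j / Real.Gamma (γ * j + γ)) := by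
      intro y hy
      simp only [F]
      rw [neg_pow]
      ring
    rw [setIntegral_congr_fun measurableSet_Ioc heq, MeasureTheory.integral_mul_const, hval]
    have hΓrec : Real.Gamma (γ * j + (1 + γ)) = (γ * ((j:ℝ)+1)) * Real.Gamma (γ * j + γ) := by
      rw [show γ * (j:ℝ) + (1 + γ) = (γ * (j:ℝ) + γ) + 1 by ring,
        Real.Gamma_add_one (by positivity : (γ * (j:ℝ) + γ) ≠ 0)]
      ring
    rw [hΓrec, neg_pow, pow_succ]
    have h1 : ((j:ℝ)+1) ≠ 0 := by positivity
    field_simp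
    ring
  rw [tsum_congr hterm, tsum_mul_left]
  rw [ml_rec hγ0 hγ1 one_pos (-x), Real.Gamma_one]
  simp only [mittagLeffler]
  ring

lemma f_antitone (hγ0 : 0 < γ) (hγ1 : γ < 1) {x₁ x₂ : ℝ} (h0 : 0 ≤ x₁) (h12 : x₁ ≤ x₂) :
    mittagLeffler γ 1 (-x₂) ≤ mittagLeffler γ 1 (-x₁) := by
  have hcont : Continuous (fun y : ℝ => mittagLeffler γ γ (-y)) :=
    (ml_cont hγ0 hγ1.le hγ0).comp continuous_neg
  have hint : ∀ a b : ℝ, IntervalIntegrable (fun y => mittagLeffler γ γ (-y)) volume a b :=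
    fun a b => hcont.intervalIntegrable a b
  have hadd := intervalIntegral.integral_add_adjacent_intervals
    (hint 0 x₁) (hint x₁ x₂)
  rw [g_integral hγ0 hγ1.le h0, g_integral hγ0 hγ1.le (h0.trans h12)] at hadd
  have hnn : 0 ≤ ∫ y in x₁..x₂, mittagLeffler γ γ (-y) := by
    apply intervalIntegral.integral_nonneg h12
    intro u hu
    exact (g_pos hγ0 hγ1 u (h0.trans hu.1)).le
  nlinarith [hadd, hnn]


lemma key_ineq (hγ0 : 0 < γ) (hγ1 : γ < 1) {x : ℝ} (hx : 0 < x) :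
    mittagLeffler γ 1 (-x) * (Real.Gamma (1 + γ) + x) ≤ Real.Gamma (1 + γ) := by
  have hΓγ : 0 < Real.Gamma γ := Real.Gamma_pos_of_pos hγ0
  have hΓ1γ : 0 < Real.Gamma (1 + γ) := Real.Gamma_pos_of_pos (by linarith)
  set t := x ^ (1/γ) with htdef
  have ht : 0 < t := Real.rpow_pos_of_pos hx _
  have htγ : t ^ γ = x := by
    rw [htdef, ← Real.rpow_mul hx.le, one_div, inv_mul_cancel₀ hγ0.ne', Real.rpow_one]
  have hrpow_cont : Continuous fun s : ℝ => s ^ γ := by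
    apply continuous_iff_continuousAt.2
    intro y
    exact Real.continuousAt_rpow_const y γ (Or.inr hγ0.le)
  have hker : IntervalIntegrable (fun s => (t - s) ^ (γ-1)) volume 0 t := by
    have := (intervalIntegral.intervalIntegrable_rpow'
      (by linarith : (-1:ℝ) < γ - 1) (a := 0) (b := t)).comp_sub_left t
    rw [sub_zero, sub_self] at this
    exact this.symm
  have hfcont : Continuous fun s : ℝ => mittagLeffler γ 1 (-(s ^ γ)) :=
    (ml_cont hγ0 hγ1.le one_pos).comp (continuous_neg.comp hrpow_cont)
  have int2 : IntervalIntegrable (fun s => (t-s)^(γ-1) * mittagLeffler γ 1 (-(s^γ)))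
      volume 0 t := hker.mul_continuousOn hfcont.continuousOn
  have int1 : IntervalIntegrable (fun s => (t-s)^(γ-1) * mittagLeffler γ 1 (-(t^γ)))
      volume 0 t := hker.mul_const _
  have hswap := ml_swap hγ0 hγ1.le one_pos ht
  have hLHSeq : ∫ s in (0:ℝ)..t, s ^ ((1:ℝ)-1) * (t-s)^(γ-1) * mittagLeffler γ 1 (-(s^γ))
      = ∫ s in (0:ℝ)..t, (t-s)^(γ-1) * mittagLeffler γ 1 (-(s^γ)) := by
    apply intervalIntegral.integral_congr
    intro s _
    norm_num
  rw [hLHSeq] at hswap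
  have hmono_int : ∫ s in (0:ℝ)..t, (t-s)^(γ-1) * mittagLeffler γ 1 (-(t^γ))
        ≤ ∫ s in (0:ℝ)..t, (t-s)^(γ-1) * mittagLeffler γ 1 (-(s^γ)) := by
    apply intervalIntegral.integral_mono_on ht.le int1 int2
    intro s hs
    have hsγ : s ^ γ ≤ t ^ γ := Real.rpow_le_rpow hs.1 hs.2 hγ0.le
    exact mul_le_mul_of_nonneg_left
      (f_antitone hγ0 hγ1 (Real.rpow_nonneg hs.1 γ) hsγ)
      (Real.rpow_nonneg (by linarith [hs.2]) _)
  have hconstint : ∫ s in (0:ℝ)..t, (t-s)^(γ-1) = t ^ γ / γ := by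
    rw [intervalIntegral.integral_comp_sub_left (fun u => u ^ (γ-1)) t, sub_zero, sub_self,
      integral_rpow (Or.inl (by linarith : (-1:ℝ) < γ - 1))]
    rw [Real.zero_rpow (by linarith : γ - 1 + 1 ≠ 0)]
    norm_num
  have hconst : ∫ s in (0:ℝ)..t, (t-s)^(γ-1) * mittagLeffler γ 1 (-(t^γ))
      = (t^γ/γ) * mittagLeffler γ 1 (-(t^γ)) := by
    rw [intervalIntegral.integral_mul_const, hconstint]
  have hrec := ml_rec hγ0 hγ1.le one_pos (-(t^γ))
  rw [Real.Gamma_one] at hrec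
  -- hrec : ML γ 1 (-(t^γ)) = 1/1 + (-(t^γ)) * ML γ (1+γ) (-(t^γ))
  have hΓadd : Real.Gamma (1 + γ) = γ * Real.Gamma γ := by
    rw [add_comm, Real.Gamma_add_one hγ0.ne']
  rw [hconst] at hmono_int
  rw [hswap, show (1:ℝ) + γ - 1 = γ by ring] at hmono_int
  set f := mittagLeffler γ 1 (-(t^γ)) with hf
  set M := mittagLeffler γ (1+γ) (-(t^γ)) with hM
  have hxM : (t^γ) * M = 1 - f := by rw [hrec]; ring
  rw [htγ] at hmono_int hxM hf
  rw [← hf, hΓadd]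
  have h2 : x * f ≤ γ * (Real.Gamma γ * (x * M)) := by
    calc x * f = γ * (x / γ * f) := by field_simp
      _ ≤ γ * (Real.Gamma γ * (x * M)) := mul_le_mul_of_nonneg_left hmono_int hγ0.le
  rw [hxM] at h2
  nlinarith [h2]

end MLBound

/-- For `0 < γ < 1`, `T > 0` and every `s > 0`,
`s/(1 − E_{γ,1}(−s T^γ)) ≤ s + Γ(1+γ)/T^γ`. -/
theorem multiplier_bound (γ T : ℝ) (hγ0 : 0 < γ) (hγ1 : γ < 1) (hT : 0 < T) :
    ∀ s : ℝ, 0 < s →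
      s / (1 - mittagLeffler γ 1 (-(s * T ^ γ))) ≤ s + Real.Gamma (1 + γ) / T ^ γ := by
  intro s hs
  have hTγ : (0:ℝ) < T ^ γ := Real.rpow_pos_of_pos hT γ
  have hx : 0 < s * T ^ γ := mul_pos hs hTγ
  set x := s * T ^ γ with hxdef
  have hΓ : 0 < Real.Gamma (1 + γ) := Real.Gamma_pos_of_pos (by linarith)
  have key := MLBound.key_ineq hγ0 hγ1 hx
  set E := mittagLeffler γ 1 (-x) with hE
  have hΓx : 0 < Real.Gamma (1 + γ) + x := by linarith
  have h1E : x / (Real.Gamma (1 + γ) + x) ≤ 1 - E := by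
    rw [div_le_iff₀ hΓx]; nlinarith
  have h1E0 : 0 < 1 - E := lt_of_lt_of_le (div_pos hx hΓx) h1E
  have step : s / (1 - E) ≤ s / (x / (Real.Gamma (1 + γ) + x)) :=
    div_le_div_of_nonneg_left hs.le (div_pos hx hΓx) h1E
  refine step.trans (le_of_eq ?_)
  rw [div_div_eq_mul_div, hxdef]
  field_simp
  ring
end

section
/- Let ε > 0 and define u(t,x) := (ε/√π) ∫₀^∞ ((1 − e^{−λ² t})/(1 − e^{−λ²})) · e^{−λ²/4} · cos(λx) dλ and f(x) := (ε/√π) ∫₀^∞ (λ² e^{−λ²/4}/(1 − e^{−λ²})) · cos(λx) dλ. Then for every t ∈ (0,1) and every x > 0 the function u is differentiable in t and twice differentiable in x at (t,x), and ∂_t u(t,x) − ∂²_{xx} u(t,x) = f(x). -/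
open Real MeasureTheory

section aux

/-- integrability of `l^n e^{-l²/4}` on `(0,∞)`. -/
lemma heatAux_intOn (n : ℕ) :
    IntegrableOn (fun l : ℝ => l ^ n * Real.exp (-l ^ 2 / 4)) (Set.Ioi 0) := by
  have h := integrableOn_rpow_mul_exp_neg_mul_sq (b := 1/4) (by norm_num)
    (s := (n : ℝ)) (lt_of_lt_of_le (by norm_num) (Nat.cast_nonneg n))
  refine h.congr_fun (fun x hx => ?_) measurableSet_Ioi
  dsimp only
  rw [Real.rpow_natCast]
  congr 1
  congr 1
  ring

lemma heatAux_int_exp :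
    IntegrableOn (fun l : ℝ => Real.exp (-l ^ 2 / 4)) (Set.Ioi 0) := by
  simpa using heatAux_intOn 0

lemma heatAux_int_poly :
    IntegrableOn (fun l : ℝ => (1 + l ^ 2) * Real.exp (-l ^ 2 / 4)) (Set.Ioi 0) := by
  refine ((heatAux_intOn 0).add (heatAux_intOn 2)).congr
    (Filter.Eventually.of_forall fun l => ?_)
  simp only [Pi.add_apply]
  ring

lemma heatAux_int_lin :
    IntegrableOn (fun l : ℝ => l * Real.exp (-l ^ 2 / 4)) (Set.Ioi 0) := by
  refine (heatAux_intOn 1).congr_fun (fun l _ => by ring) measurableSet_Ioi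

lemma heatAux_int_sq :
    IntegrableOn (fun l : ℝ => l ^ 2 * Real.exp (-l ^ 2 / 4)) (Set.Ioi 0) :=
  heatAux_intOn 2

lemma heatAux_meas_base (t x : ℝ) :
    Measurable (fun l : ℝ => (1 - Real.exp (-l ^ 2 * t)) / (1 - Real.exp (-l ^ 2)) *
      Real.exp (-l ^ 2 / 4) * Real.cos (l * x)) := by
  have h2 : Measurable fun l : ℝ => l ^ 2 := measurable_id.pow_const 2
  exact (((measurable_const.sub ((h2.neg.mul_const t).exp)).div
    (measurable_const.sub h2.neg.exp)).mul (h2.neg.div_const 4).exp).mul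
    ((measurable_id.mul_const x).cos)

lemma heatAux_denom_pos {l : ℝ} (hl : 0 < l) : 0 < 1 - Real.exp (-l ^ 2) := by
  have : Real.exp (-l ^ 2) < 1 := by
    rw [Real.exp_lt_one_iff]; nlinarith
  linarith

lemma heatAux_sq_div_le {l : ℝ} (hl : 0 < l) :
    l ^ 2 / (1 - Real.exp (-l ^ 2)) ≤ 1 + l ^ 2 := by
  have hD := heatAux_denom_pos hl
  have h1 := Real.add_one_le_exp (l ^ 2)
  have h2 : Real.exp (-l ^ 2) * Real.exp (l ^ 2) = 1 := by
    rw [← Real.exp_add]; simp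
  have h3 := Real.exp_pos (-l ^ 2)
  rw [div_le_iff₀ hD]
  nlinarith

lemma heatAux_frac_nonneg {l t : ℝ} (hl : 0 < l) (ht : 0 ≤ t) :
    0 ≤ (1 - Real.exp (-l ^ 2 * t)) / (1 - Real.exp (-l ^ 2)) := by
  have hD := heatAux_denom_pos hl
  have : Real.exp (-l ^ 2 * t) ≤ 1 := by
    rw [Real.exp_le_one_iff]; nlinarith
  apply div_nonneg <;> linarith

lemma heatAux_frac_le_one {l t : ℝ} (hl : 0 < l) (ht : t ≤ 1) :
    (1 - Real.exp (-l ^ 2 * t)) / (1 - Real.exp (-l ^ 2)) ≤ 1 := by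
  have hD := heatAux_denom_pos hl
  rw [div_le_one hD]
  have : Real.exp (-l ^ 2) ≤ Real.exp (-l ^ 2 * t) := by
    apply Real.exp_le_exp.mpr; nlinarith
  linarith

end aux

/-- The perturbed solution of the stability test:
`u(t,x) = (ε/√π) ∫₀^∞ ((1 − e^{−λ²t})/(1 − e^{−λ²})) e^{−λ²/4} cos(λx) dλ`. -/
noncomputable def uPert (ε t x : ℝ) : ℝ :=
  (ε / Real.sqrt Real.pi) *
    ∫ l in Set.Ioi (0 : ℝ),
      ((1 - Real.exp (-l ^ 2 * t)) / (1 - Real.exp (-l ^ 2))) *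
        Real.exp (-l ^ 2 / 4) * Real.cos (l * x)

/-- The perturbed source of the stability test:
`f(x) = (ε/√π) ∫₀^∞ (λ² e^{−λ²/4}/(1 − e^{−λ²})) cos(λx) dλ`. -/
noncomputable def fPert (ε x : ℝ) : ℝ :=
  (ε / Real.sqrt Real.pi) *
    ∫ l in Set.Ioi (0 : ℝ),
      (l ^ 2 * Real.exp (-l ^ 2 / 4) / (1 - Real.exp (-l ^ 2))) * Real.cos (l * x)

section main

variable {t x : ℝ}

/-- `t`-derivative integrand. -/
noncomputable def Ft (t x l : ℝ) : ℝ :=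
  l ^ 2 * Real.exp (-l ^ 2 * t) / (1 - Real.exp (-l ^ 2)) *
    Real.exp (-l ^ 2 / 4) * Real.cos (l * x)

/-- `x`-derivative integrand. -/
noncomputable def Fx (t x l : ℝ) : ℝ :=
  (1 - Real.exp (-l ^ 2 * t)) / (1 - Real.exp (-l ^ 2)) *
    Real.exp (-l ^ 2 / 4) * (-(l * Real.sin (l * x)))

/-- second `x`-derivative integrand. -/
noncomputable def Fxx (t x l : ℝ) : ℝ :=
  (1 - Real.exp (-l ^ 2 * t)) / (1 - Real.exp (-l ^ 2)) *
    Real.exp (-l ^ 2 / 4) * (-(l ^ 2 * Real.cos (l * x)))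

lemma meas_u (t x : ℝ) :
    AEStronglyMeasurable
      (fun l : ℝ => (1 - Real.exp (-l ^ 2 * t)) / (1 - Real.exp (-l ^ 2)) *
        Real.exp (-l ^ 2 / 4) * Real.cos (l * x))
      (volume.restrict (Set.Ioi 0)) := by
  exact (heatAux_meas_base t x).aestronglyMeasurable

lemma meas_Ft (t x : ℝ) :
    AEStronglyMeasurable (Ft t x) (volume.restrict (Set.Ioi 0)) := by
  have h2 : Measurable fun l : ℝ => l ^ 2 := measurable_id.pow_const 2
  unfold Ft
  exact ((((h2.mul ((h2.neg.mul_const t).exp)).div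
    (measurable_const.sub h2.neg.exp)).mul (h2.neg.div_const 4).exp).mul
    ((measurable_id.mul_const x).cos)).aestronglyMeasurable

lemma meas_Fx (t x : ℝ) :
    AEStronglyMeasurable (Fx t x) (volume.restrict (Set.Ioi 0)) := by
  have h2 : Measurable fun l : ℝ => l ^ 2 := measurable_id.pow_const 2
  unfold Fx
  exact ((((measurable_const.sub ((h2.neg.mul_const t).exp)).div
    (measurable_const.sub h2.neg.exp)).mul (h2.neg.div_const 4).exp).mul
    ((measurable_id.mul ((measurable_id.mul_const x).sin)).neg)).aestronglyMeasurable

lemma meas_Fxx (t x : ℝ) :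
    AEStronglyMeasurable (Fxx t x) (volume.restrict (Set.Ioi 0)) := by
  have h2 : Measurable fun l : ℝ => l ^ 2 := measurable_id.pow_const 2
  unfold Fxx
  exact ((((measurable_const.sub ((h2.neg.mul_const t).exp)).div
    (measurable_const.sub h2.neg.exp)).mul (h2.neg.div_const 4).exp).mul
    ((h2.mul ((measurable_id.mul_const x).cos)).neg)).aestronglyMeasurable

lemma int_u (ht0 : 0 < t) (ht1 : t < 1) (x : ℝ) :
    Integrable
      (fun l : ℝ => (1 - Real.exp (-l ^ 2 * t)) / (1 - Real.exp (-l ^ 2)) *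
        Real.exp (-l ^ 2 / 4) * Real.cos (l * x))
      (volume.restrict (Set.Ioi 0)) := by
  refine Integrable.mono' heatAux_int_exp (meas_u t x) ?_
  rw [ae_restrict_iff' measurableSet_Ioi]
  filter_upwards with l hl
  have hf0 := heatAux_frac_nonneg hl ht0.le
  have hf1 := heatAux_frac_le_one hl ht1.le
  have hc := abs_cos_le_one (l * x)
  have he := Real.exp_pos (-l ^ 2 / 4)
  rw [Real.norm_eq_abs, abs_mul, abs_mul, abs_of_nonneg hf0, abs_of_nonneg he.le]
  calc (1 - Real.exp (-l ^ 2 * t)) / (1 - Real.exp (-l ^ 2)) *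
        Real.exp (-l ^ 2 / 4) * |Real.cos (l * x)|
      ≤ 1 * Real.exp (-l ^ 2 / 4) * 1 := by
        apply mul_le_mul (mul_le_mul hf1 le_rfl he.le zero_le_one) hc (abs_nonneg _) (by positivity)
    _ = Real.exp (-l ^ 2 / 4) := by ring

/-- differentiation in `t` under the integral. -/
lemma hasDeriv_t (ht0 : 0 < t) (ht1 : t < 1) (x : ℝ) :
    Integrable (Ft t x) (volume.restrict (Set.Ioi 0)) ∧
    HasDerivAt
      (fun s : ℝ => ∫ l in Set.Ioi (0 : ℝ),
        (1 - Real.exp (-l ^ 2 * s)) / (1 - Real.exp (-l ^ 2)) *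
          Real.exp (-l ^ 2 / 4) * Real.cos (l * x))
      (∫ l in Set.Ioi (0 : ℝ), Ft t x l) t := by
  have key := hasDerivAt_integral_of_dominated_loc_of_deriv_le
    (μ := volume.restrict (Set.Ioi (0:ℝ)))
    (F := fun s l => (1 - Real.exp (-l ^ 2 * s)) / (1 - Real.exp (-l ^ 2)) *
      Real.exp (-l ^ 2 / 4) * Real.cos (l * x))
    (F' := fun s l => Ft s x l)
    (x₀ := t)
    (bound := fun l => (1 + l ^ 2) * Real.exp (-l ^ 2 / 4))
    (Metric.ball_mem_nhds t (half_pos ht0))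
    (Filter.Eventually.of_forall fun s => meas_u s x)
    (int_u ht0 ht1 x)
    (meas_Ft t x)
    ?_ ?_ ?_
  · exact key
  · -- bound
    rw [ae_restrict_iff' measurableSet_Ioi]
    filter_upwards with l hl
    intro s hs
    rw [Metric.mem_ball, Real.dist_eq, abs_lt] at hs
    have hs0 : 0 < s := by linarith
    have hD := heatAux_denom_pos hl
    have hdiv := heatAux_sq_div_le hl
    have hexp1 : Real.exp (-l ^ 2 * s) ≤ 1 := by
      rw [Real.exp_le_one_iff]; nlinarith
    have hexp0 := (Real.exp_pos (-l ^ 2 * s)).le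
    have hc := abs_cos_le_one (l * x)
    have he := (Real.exp_pos (-l ^ 2 / 4)).le
    unfold Ft
    rw [Real.norm_eq_abs, abs_mul, abs_mul, abs_of_nonneg he,
      abs_of_nonneg (by positivity : (0:ℝ) ≤ l ^ 2 * Real.exp (-l ^ 2 * s) / (1 - Real.exp (-l ^ 2)))]
    have h1 : l ^ 2 * Real.exp (-l ^ 2 * s) / (1 - Real.exp (-l ^ 2)) ≤ 1 + l ^ 2 := by
      have hnum : l ^ 2 * Real.exp (-l ^ 2 * s) ≤ l ^ 2 := by nlinarith
      exact ((div_le_div_iff_of_pos_right hD).mpr hnum).trans hdiv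
    calc l ^ 2 * Real.exp (-l ^ 2 * s) / (1 - Real.exp (-l ^ 2)) *
          Real.exp (-l ^ 2 / 4) * |Real.cos (l * x)|
        ≤ (1 + l ^ 2) * Real.exp (-l ^ 2 / 4) * 1 := by
          apply mul_le_mul (mul_le_mul h1 le_rfl (Real.exp_pos _).le (by positivity)) hc
            (abs_nonneg _) (by positivity)
      _ = (1 + l ^ 2) * Real.exp (-l ^ 2 / 4) := by ring
  · exact heatAux_int_poly
  · -- differentiability
    rw [ae_restrict_iff' measurableSet_Ioi]
    filter_upwards with l hl
    intro s _
    have hD := heatAux_denom_pos hl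
    have h1 : HasDerivAt (fun s : ℝ => -l ^ 2 * s) (-l ^ 2) s := by
      simpa using (hasDerivAt_id s).const_mul (-l ^ 2)
    have h2 := h1.exp
    have h3 := ((hasDerivAt_const s (1:ℝ)).sub h2).div_const (1 - Real.exp (-l ^ 2))
    have h4 := (h3.mul_const (Real.exp (-l ^ 2 / 4))).mul_const (Real.cos (l * x))
    refine h4.congr_deriv ?_
    unfold Ft
    ring

/-- differentiation in `x` under the integral (valid at every point `y`). -/
lemma hasDeriv_x (ht0 : 0 < t) (ht1 : t < 1) (y : ℝ) :
    Integrable (Fx t y) (volume.restrict (Set.Ioi 0)) ∧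
    HasDerivAt
      (fun z : ℝ => ∫ l in Set.Ioi (0 : ℝ),
        (1 - Real.exp (-l ^ 2 * t)) / (1 - Real.exp (-l ^ 2)) *
          Real.exp (-l ^ 2 / 4) * Real.cos (l * z))
      (∫ l in Set.Ioi (0 : ℝ), Fx t y l) y := by
  have key := hasDerivAt_integral_of_dominated_loc_of_deriv_le
    (μ := volume.restrict (Set.Ioi (0:ℝ)))
    (F := fun z l => (1 - Real.exp (-l ^ 2 * t)) / (1 - Real.exp (-l ^ 2)) *
      Real.exp (-l ^ 2 / 4) * Real.cos (l * z))
    (F' := fun z l => Fx t z l)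
    (x₀ := y)
    (bound := fun l => l * Real.exp (-l ^ 2 / 4))
    (Metric.ball_mem_nhds y one_pos)
    (Filter.Eventually.of_forall fun z => meas_u t z)
    (int_u ht0 ht1 y)
    (meas_Fx t y)
    ?_ ?_ ?_
  · exact key
  · rw [ae_restrict_iff' measurableSet_Ioi]
    filter_upwards with l hl
    intro z _
    have hf0 := heatAux_frac_nonneg hl ht0.le
    have hf1 := heatAux_frac_le_one hl ht1.le
    have he := (Real.exp_pos (-l ^ 2 / 4)).le
    have hs : |Real.sin (l * z)| ≤ 1 := abs_sin_le_one (l * z)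
    unfold Fx
    rw [Real.norm_eq_abs, abs_mul, abs_mul, abs_neg, abs_mul,
      abs_of_nonneg hf0, abs_of_nonneg he, abs_of_nonneg hl.le]
    calc (1 - Real.exp (-l ^ 2 * t)) / (1 - Real.exp (-l ^ 2)) *
          Real.exp (-l ^ 2 / 4) * (l * |Real.sin (l * z)|)
        ≤ 1 * Real.exp (-l ^ 2 / 4) * (l * 1) := by
          apply mul_le_mul (mul_le_mul hf1 le_rfl he zero_le_one)
            (mul_le_mul le_rfl hs (abs_nonneg _) hl.le)
            (mul_nonneg hl.le (abs_nonneg _)) (by positivity)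
      _ = l * Real.exp (-l ^ 2 / 4) := by ring
  · exact heatAux_int_lin
  · rw [ae_restrict_iff' measurableSet_Ioi]
    filter_upwards with l hl
    intro z _
    have h1 : HasDerivAt (fun z : ℝ => l * z) l z := by
      simpa using (hasDerivAt_id z).const_mul l
    have h2 := h1.cos
    have h3 := h2.const_mul
      ((1 - Real.exp (-l ^ 2 * t)) / (1 - Real.exp (-l ^ 2)) * Real.exp (-l ^ 2 / 4))
    refine h3.congr_deriv ?_
    unfold Fx
    ring

/-- second differentiation in `x` under the integral. -/
lemma hasDeriv_xx (ht0 : 0 < t) (ht1 : t < 1) (x : ℝ) :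
    Integrable (Fxx t x) (volume.restrict (Set.Ioi 0)) ∧
    HasDerivAt
      (fun y : ℝ => ∫ l in Set.Ioi (0 : ℝ), Fx t y l)
      (∫ l in Set.Ioi (0 : ℝ), Fxx t x l) x := by
  have key := hasDerivAt_integral_of_dominated_loc_of_deriv_le
    (μ := volume.restrict (Set.Ioi (0:ℝ)))
    (F := fun y l => Fx t y l)
    (F' := fun y l => Fxx t y l)
    (x₀ := x)
    (bound := fun l => l ^ 2 * Real.exp (-l ^ 2 / 4))
    (Metric.ball_mem_nhds x one_pos)
    (Filter.Eventually.of_forall fun y => meas_Fx t y)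
    ((hasDeriv_x ht0 ht1 x).1)
    (meas_Fxx t x)
    ?_ ?_ ?_
  · exact key
  · rw [ae_restrict_iff' measurableSet_Ioi]
    filter_upwards with l hl
    intro y _
    have hf0 := heatAux_frac_nonneg hl ht0.le
    have hf1 := heatAux_frac_le_one hl ht1.le
    have he := (Real.exp_pos (-l ^ 2 / 4)).le
    have hc : |Real.cos (l * y)| ≤ 1 := abs_cos_le_one (l * y)
    unfold Fxx
    rw [Real.norm_eq_abs, abs_mul, abs_mul, abs_neg, abs_mul,
      abs_of_nonneg hf0, abs_of_nonneg he, abs_of_nonneg (by positivity : (0:ℝ) ≤ l ^ 2)]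
    calc (1 - Real.exp (-l ^ 2 * t)) / (1 - Real.exp (-l ^ 2)) *
          Real.exp (-l ^ 2 / 4) * (l ^ 2 * |Real.cos (l * y)|)
        ≤ 1 * Real.exp (-l ^ 2 / 4) * (l ^ 2 * 1) := by
          apply mul_le_mul (mul_le_mul hf1 le_rfl he zero_le_one)
            (mul_le_mul le_rfl hc (abs_nonneg _) (sq_nonneg l))
            (mul_nonneg (sq_nonneg l) (abs_nonneg _)) (by positivity)
      _ = l ^ 2 * Real.exp (-l ^ 2 / 4) := by ring
  · exact heatAux_intOn 2
  · rw [ae_restrict_iff' measurableSet_Ioi]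
    filter_upwards with l hl
    intro y _
    have h1 : HasDerivAt (fun y : ℝ => l * y) l y := by
      simpa using (hasDerivAt_id y).const_mul l
    have h2 := h1.sin
    have h3 := ((h2.const_mul l).neg).const_mul
      ((1 - Real.exp (-l ^ 2 * t)) / (1 - Real.exp (-l ^ 2)) * Real.exp (-l ^ 2 / 4))
    simp only [Fx, Fxx]
    refine h3.congr_deriv ?_
    ring

end main

/-- For `ε > 0`, every `t ∈ (0,1)` and `x > 0`, the pair `(u, f)` of the
stability test satisfies the heat equation `∂ₜu − ∂²ₓₓu = f(x)`: `u` is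
differentiable in `t`, twice differentiable in `x`, and the equation holds. -/
theorem uPert_solves_heat (ε : ℝ) (hε : 0 < ε) :
    ∀ t ∈ Set.Ioo (0 : ℝ) 1, ∀ x : ℝ, 0 < x →
      DifferentiableAt ℝ (fun s : ℝ => uPert ε s x) t ∧
      DifferentiableAt ℝ (fun y : ℝ => uPert ε t y) x ∧
      DifferentiableAt ℝ (fun y : ℝ => deriv (fun z : ℝ => uPert ε t z) y) x ∧
      deriv (fun s : ℝ => uPert ε s x) t -
        deriv (fun y : ℝ => deriv (fun z : ℝ => uPert ε t z) y) x = fPert ε x := by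
  intro t ht x hx
  obtain ⟨ht0, ht1⟩ := ht
  set c : ℝ := ε / Real.sqrt Real.pi with hc
  -- t-derivative
  have hT := hasDeriv_t (x := x) ht0 ht1
  have huT : HasDerivAt (fun s : ℝ => uPert ε s x)
      (c * ∫ l in Set.Ioi (0 : ℝ), Ft t x l) t := by
    have := hT.2.const_mul c
    simpa only [uPert] using this
  -- first x-derivative at every point
  have huX : ∀ y : ℝ, HasDerivAt (fun z : ℝ => uPert ε t z)
      (c * ∫ l in Set.Ioi (0 : ℝ), Fx t y l) y := by
    intro y
    have := (hasDeriv_x ht0 ht1 y).2.const_mul c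
    simpa only [uPert] using this
  have hderiv_x : (fun y : ℝ => deriv (fun z : ℝ => uPert ε t z) y) =
      fun y : ℝ => c * ∫ l in Set.Ioi (0 : ℝ), Fx t y l := by
    funext y; exact (huX y).deriv
  -- second x-derivative
  have hXX := hasDeriv_xx (x := x) ht0 ht1
  have huXX : HasDerivAt (fun y : ℝ => deriv (fun z : ℝ => uPert ε t z) y)
      (c * ∫ l in Set.Ioi (0 : ℝ), Fxx t x l) x := by
    rw [hderiv_x]
    exact hXX.2.const_mul c
  refine ⟨huT.differentiableAt, (huX x).differentiableAt, huXX.differentiableAt, ?_⟩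
  rw [huT.deriv, huXX.deriv]
  rw [fPert, ← hc, ← mul_sub]
  congr 1
  rw [← integral_sub hT.1 hXX.1]
  apply setIntegral_congr_fun measurableSet_Ioi
  intro l hl
  have hD := (heatAux_denom_pos hl).ne'
  unfold Ft Fxx
  field_simp
  ring
end
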